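/- Let G = (ℤ/2ℤ)^n of size N = 2^n, let ε ∈ (0, 1/2) and A ⊆ G. Then there is a subgroup H ≤ G of index at most W(ε^{−3}) which is ε-regular for A, where W(t) denotes a tower of twos of height ⌈t⌉. -/

import Mathlib

/-- Fourier coefficient on a subgroup `H ≤ (ℤ/2ℤ)ⁿ` of `A_H^{+g}` at `η ∈ H*`. -/
noncomputable def fcoef {n : ℕ} (A : Set (Fin n → ZMod 2))
    (H : AddSubgroup (Fin n → ZMod 2)) (g : Fin n → ZMod 2) (η : H →+ ZMod 2) : ℝ :=
  ∑ᶠ x : H, Set.indicator A (fun _ => (1 : ℝ)) ((x : Fin n → ZMod 2) + g) *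
    (-1 : ℝ) ^ (η x).val

/-- `g` is an `ε`-regular value for `A` with respect to `H`. -/
def IsRegularValue {n : ℕ} (ε : ℝ) (A : Set (Fin n → ZMod 2))
    (H : AddSubgroup (Fin n → ZMod 2)) (g : Fin n → ZMod 2) : Prop :=
  ∀ η : H →+ ZMod 2, η ≠ 0 → |fcoef A H g η| ≤ ε * Nat.card H

/-- `tower h` is a tower of twos of height `h`. -/
def tower : ℕ → ℕ
  | 0 => 1
  | h + 1 => 2 ^ tower h

open scoped Classical
open Finset

section Aux

variable {n : ℕ}

/-- real-valued indicator -/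
noncomputable def ind (A : Set (Fin n → ZMod 2)) (v : Fin n → ZMod 2) : ℝ :=
  Set.indicator A (fun _ => (1 : ℝ)) v

lemma ind_nonneg (A : Set (Fin n → ZMod 2)) (v) : 0 ≤ ind A v := by
  unfold ind Set.indicator; split_ifs <;> norm_num

lemma ind_le_one (A : Set (Fin n → ZMod 2)) (v) : ind A v ≤ 1 := by
  unfold ind Set.indicator; split_ifs <;> norm_num

/-- dnsity of A on the coset g + H -/
noncomputable def dns (A : Set (Fin n → ZMod 2)) (H : AddSubgroup (Fin n → ZMod 2))
    (g : Fin n → ZMod 2) : ℝ :=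
  (∑ x : H, ind A ((x : Fin n → ZMod 2) + g)) / (Nat.card H)

noncomputable def energy (A : Set (Fin n → ZMod 2)) (H : AddSubgroup (Fin n → ZMod 2)) : ℝ :=
  (∑ g : Fin n → ZMod 2, dns A H g ^ 2) / (Fintype.card (Fin n → ZMod 2))

noncomputable def sgn {H : AddSubgroup (Fin n → ZMod 2)} (η : H →+ ZMod 2) (x : H) : ℝ :=
  (-1 : ℝ) ^ (η x).val

lemma zmod2_cases (a : ZMod 2) : a = 0 ∨ a = 1 := by revert a; decide

lemma sgn_add {H : AddSubgroup (Fin n → ZMod 2)} (η : H →+ ZMod 2) (x y : H) :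
    sgn η (x + y) = sgn η x * sgn η y := by
  unfold sgn
  rw [map_add]
  rcases zmod2_cases (η x) with h | h <;> rcases zmod2_cases (η y) with h' | h' <;>
    rw [h, h'] <;> norm_num [show ZMod.val ((1:ZMod 2)+1) = 0 from rfl, show ZMod.val (2:ZMod 2) = 0 from rfl, show ZMod.val (1:ZMod 2) = 1 from rfl]

lemma sgn_mul_self {H : AddSubgroup (Fin n → ZMod 2)} (η : H →+ ZMod 2) (x : H) :
    sgn η x * sgn η x = 1 := by
  unfold sgn
  rcases zmod2_cases (η x) with h | h <;> rw [h] <;>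
    norm_num [show ZMod.val (0:ZMod 2) = 0 from rfl, show ZMod.val (1:ZMod 2) = 1 from rfl]

lemma sgn_of_eq_zero {H : AddSubgroup (Fin n → ZMod 2)} {η : H →+ ZMod 2} {x : H}
    (h : η x = 0) : sgn η x = 1 := by
  unfold sgn; rw [h]; norm_num [show ZMod.val (0:ZMod 2) = 0 from rfl]

lemma sgn_zero_hom {H : AddSubgroup (Fin n → ZMod 2)} (x : H) :
    sgn (0 : H →+ ZMod 2) x = 1 := sgn_of_eq_zero rfl

lemma sum_sgn_eq_zero {H : AddSubgroup (Fin n → ZMod 2)} {η : H →+ ZMod 2} (hη : η ≠ 0) :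
    ∑ x : H, sgn η x = 0 := by
  obtain ⟨h₀, hh₀⟩ : ∃ x : H, η x ≠ 0 := by
    by_contra h
    push_neg at h
    exact hη (by ext x; exact h x)
  have h1 : η h₀ = 1 := (zmod2_cases (η h₀)).resolve_left hh₀
  have hs : ∑ x : H, sgn η (x + h₀) = ∑ x : H, sgn η x :=
    Equiv.sum_comp (Equiv.addRight h₀) (sgn η)
  have hneg : ∀ x : H, sgn η (x + h₀) = - sgn η x := by
    intro x
    rw [sgn_add]
    have : sgn η h₀ = -1 := by
      unfold sgn; rw [h1]; norm_num [show ZMod.val (1:ZMod 2) = 1 from rfl]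
    rw [this]; ring
  rw [Finset.sum_congr rfl (fun x _ => hneg x), Finset.sum_neg_distrib] at hs
  linarith

lemma cardH_pos (H : AddSubgroup (Fin n → ZMod 2)) : (0:ℝ) < (Nat.card H : ℝ) := by
  have : 0 < Nat.card H := Nat.card_pos
  exact_mod_cast this

lemma fcoef_eq (A : Set (Fin n → ZMod 2)) (H : AddSubgroup (Fin n → ZMod 2))
    (g : Fin n → ZMod 2) (η : H →+ ZMod 2) :
    fcoef A H g η = ∑ x : H, ind A ((x : Fin n → ZMod 2) + g) * sgn η x := by
  rw [fcoef, finsum_eq_sum_of_fintype]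
  rfl

/-- Key double-counting lemma: averaging a twisted sum of `dns A H'` over `H`. -/
lemma key {H H' : AddSubgroup (Fin n → ZMod 2)} (hle : H' ≤ H) (A : Set (Fin n → ZMod 2))
    (η : H →+ ZMod 2) (hker : ∀ y : H', η ⟨(y : Fin n → ZMod 2), hle y.2⟩ = 0)
    (g : Fin n → ZMod 2) :
    ∑ x : H, dns A H' ((x : Fin n → ZMod 2) + g) * sgn η x
      = ∑ x : H, ind A ((x : Fin n → ZMod 2) + g) * sgn η x := by
  have hc' : (0:ℝ) < (Nat.card H' : ℝ) := cardH_pos H'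
  have main : ∑ x : H, (∑ y : H', ind A ((y : Fin n → ZMod 2) + ((x : Fin n → ZMod 2) + g)))
        * sgn η x
      = (Nat.card H' : ℝ) * ∑ x : H, ind A ((x : Fin n → ZMod 2) + g) * sgn η x := by
    have inner : ∀ y : H',
        ∑ x : H, ind A ((y : Fin n → ZMod 2) + ((x : Fin n → ZMod 2) + g)) * sgn η x
          = ∑ x : H, ind A ((x : Fin n → ZMod 2) + g) * sgn η x := by
      intro y
      set c : H := ⟨(y : Fin n → ZMod 2), hle y.2⟩ with hc
      have hrw := Equiv.sum_comp (Equiv.addRight c)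
        (fun x : H => ind A ((x : Fin n → ZMod 2) + g) * sgn η x)
      rw [← hrw]
      refine Finset.sum_congr rfl (fun x _ => ?_)
      have harg : (y : Fin n → ZMod 2) + ((x : Fin n → ZMod 2) + g)
          = ((Equiv.addRight c x : H) : Fin n → ZMod 2) + g := by
        simp [Equiv.addRight]
        abel
      rw [harg]
      congr 1
      rw [show ((Equiv.addRight c) x) = x + c from rfl, sgn_add, sgn_of_eq_zero (hker y), mul_one]
    calc ∑ x : H, (∑ y : H', ind A ((y : Fin n → ZMod 2) + ((x : Fin n → ZMod 2) + g))) * sgn η x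
        = ∑ x : H, ∑ y : H', ind A ((y : Fin n → ZMod 2) + ((x : Fin n → ZMod 2) + g)) * sgn η x := by
          refine Finset.sum_congr rfl (fun x _ => ?_); rw [Finset.sum_mul]
      _ = ∑ y : H', ∑ x : H, ind A ((y : Fin n → ZMod 2) + ((x : Fin n → ZMod 2) + g)) * sgn η x :=
          Finset.sum_comm
      _ = ∑ y : H', ∑ x : H, ind A ((x : Fin n → ZMod 2) + g) * sgn η x :=
          Finset.sum_congr rfl (fun y _ => inner y)
      _ = (Nat.card H' : ℝ) * ∑ x : H, ind A ((x : Fin n → ZMod 2) + g) * sgn η x := by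
          rw [Finset.sum_const, Finset.card_univ, nsmul_eq_mul, Nat.card_eq_fintype_card]
  have lhs_eq : ∑ x : H, dns A H' ((x : Fin n → ZMod 2) + g) * sgn η x
      = (∑ x : H, (∑ y : H', ind A ((y : Fin n → ZMod 2) + ((x : Fin n → ZMod 2) + g)))
          * sgn η x) / (Nat.card H' : ℝ) := by
    rw [Finset.sum_div]
    refine Finset.sum_congr rfl (fun x _ => ?_)
    unfold dns
    rw [div_mul_eq_mul_div]
  rw [lhs_eq, main, mul_comm, mul_div_assoc, div_self (ne_of_gt hc'), mul_one]

lemma sum_dns_eq {H H' : AddSubgroup (Fin n → ZMod 2)} (hle : H' ≤ H)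
    (A : Set (Fin n → ZMod 2)) (g : Fin n → ZMod 2) :
    ∑ x : H, dns A H' ((x : Fin n → ZMod 2) + g) = (Nat.card H : ℝ) * dns A H g := by
  have h := key hle A (0 : H →+ ZMod 2) (fun y => rfl) g
  simp only [sgn_zero_hom, mul_one] at h
  rw [h]
  unfold dns
  rw [mul_div_cancel₀ _ (ne_of_gt (cardH_pos H))]

lemma sum_dns_sgn_eq {H H' : AddSubgroup (Fin n → ZMod 2)} (hle : H' ≤ H)
    (A : Set (Fin n → ZMod 2)) (η : H →+ ZMod 2)
    (hker : ∀ y : H', η ⟨(y : Fin n → ZMod 2), hle y.2⟩ = 0) (g : Fin n → ZMod 2) :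
    ∑ x : H, dns A H' ((x : Fin n → ZMod 2) + g) * sgn η x = fcoef A H g η := by
  rw [key hle A η hker g, fcoef_eq]

lemma dns_nonneg (A : Set (Fin n → ZMod 2)) (H : AddSubgroup (Fin n → ZMod 2)) (g) :
    0 ≤ dns A H g :=
  div_nonneg (Finset.sum_nonneg (fun x _ => ind_nonneg A _)) (le_of_lt (cardH_pos H))

lemma dns_le_one (A : Set (Fin n → ZMod 2)) (H : AddSubgroup (Fin n → ZMod 2)) (g) :
    dns A H g ≤ 1 := by
  unfold dns
  rw [div_le_one (cardH_pos H)]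
  calc ∑ x : H, ind A ((x : Fin n → ZMod 2) + g) ≤ ∑ _x : H, (1:ℝ) :=
        Finset.sum_le_sum (fun x _ => ind_le_one A _)
    _ = (Nat.card H : ℝ) := by
        rw [Finset.sum_const, Finset.card_univ, nsmul_eq_mul, Nat.card_eq_fintype_card, mul_one]

lemma cardV_pos : (0:ℝ) < (Fintype.card (Fin n → ZMod 2) : ℝ) := by
  have : 0 < Fintype.card (Fin n → ZMod 2) := Fintype.card_pos
  exact_mod_cast this

lemma energy_nonneg (A : Set (Fin n → ZMod 2)) (H : AddSubgroup (Fin n → ZMod 2)) :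
    0 ≤ energy A H :=
  div_nonneg (Finset.sum_nonneg (fun g _ => sq_nonneg _)) (le_of_lt cardV_pos)

lemma energy_le_one (A : Set (Fin n → ZMod 2)) (H : AddSubgroup (Fin n → ZMod 2)) :
    energy A H ≤ 1 := by
  unfold energy
  rw [div_le_one cardV_pos]
  calc ∑ g : Fin n → ZMod 2, dns A H g ^ 2 ≤ ∑ _g : Fin n → ZMod 2, (1:ℝ) := by
        refine Finset.sum_le_sum (fun g _ => ?_)
        have h1 := dns_nonneg A H g
        have h2 := dns_le_one A H g
        nlinarith
    _ = (Fintype.card (Fin n → ZMod 2) : ℝ) := by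
        rw [Finset.sum_const, Finset.card_univ, nsmul_eq_mul, mul_one]

lemma sum_translate_V (f : (Fin n → ZMod 2) → ℝ) (t : Fin n → ZMod 2) :
    ∑ g : Fin n → ZMod 2, f (t + g) = ∑ g : Fin n → ZMod 2, f g :=
  Equiv.sum_comp (Equiv.addLeft t) f

lemma fcoef_translate (A : Set (Fin n → ZMod 2)) (H : AddSubgroup (Fin n → ZMod 2))
    (g : Fin n → ZMod 2) (η : H →+ ZMod 2) (c : H) :
    fcoef A H ((c : Fin n → ZMod 2) + g) η = sgn η c * fcoef A H g η := by
  rw [fcoef_eq, fcoef_eq]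
  have hrw := Equiv.sum_comp (Equiv.addRight c)
    (fun x : H => ind A ((x : Fin n → ZMod 2) + g) * sgn η x)
  calc ∑ x : H, ind A ((x : Fin n → ZMod 2) + ((c : Fin n → ZMod 2) + g)) * sgn η x
      = ∑ x : H, sgn η c *
          (ind A ((((Equiv.addRight c) x : H) : Fin n → ZMod 2) + g)
            * sgn η ((Equiv.addRight c) x)) := by
        refine Finset.sum_congr rfl (fun x _ => ?_)
        have harg : (((Equiv.addRight c) x : H) : Fin n → ZMod 2) + g
            = (x : Fin n → ZMod 2) + ((c : Fin n → ZMod 2) + g) := by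
          simp [Equiv.addRight]
          abel
        rw [harg, show ((Equiv.addRight c) x) = x + c from rfl, sgn_add]
        have hss := sgn_mul_self η c
        linear_combination (- ind A ((x : Fin n → ZMod 2) + ((c : Fin n → ZMod 2) + g))
          * sgn η x) * hss
    _ = sgn η c * ∑ x : H, ind A ((x : Fin n → ZMod 2) + g) * sgn η x := by
        rw [← Finset.mul_sum, hrw]

lemma abs_fcoef_translate (A : Set (Fin n → ZMod 2)) (H : AddSubgroup (Fin n → ZMod 2))
    (g : Fin n → ZMod 2) (η : H →+ ZMod 2) (c : H) :
    |fcoef A H ((c : Fin n → ZMod 2) + g) η| = |fcoef A H g η| := by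
  rw [fcoef_translate, abs_mul]
  have : |sgn η c| = 1 := by
    unfold sgn
    rcases zmod2_cases (η c) with h | h <;> rw [h] <;>
      norm_num [show ZMod.val (0:ZMod 2) = 0 from rfl, show ZMod.val (1:ZMod 2) = 1 from rfl]
  rw [this, one_mul]

lemma jensen_sq {ι : Type*} [Fintype ι] (a : ι → ℝ) :
    (∑ i : ι, a i) ^ 2 ≤ (Fintype.card ι : ℝ) * ∑ i : ι, a i ^ 2 := by
  have h := sq_sum_le_card_mul_sum_sq (s := (Finset.univ : Finset ι)) (f := a)
  rw [Finset.card_univ] at h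
  exact_mod_cast h

lemma bessel_sq {ι : Type*} [Fintype ι] (a s : ι → ℝ) (hs : ∀ i, s i * s i = 1)
    (hs0 : ∑ i : ι, s i = 0) :
    (∑ i : ι, a i) ^ 2 + (∑ i : ι, a i * s i) ^ 2
      ≤ (Fintype.card ι : ℝ) * ∑ i : ι, a i ^ 2 := by
  set c : ℝ := (Fintype.card ι : ℝ) with hc
  set m : ℝ := ∑ i : ι, a i with hm
  set d : ℝ := ∑ i : ι, a i * s i with hd
  have h0 : (0:ℝ) ≤ ∑ i : ι, (c * a i - m - d * s i) ^ 2 :=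
    Finset.sum_nonneg (fun i _ => sq_nonneg _)
  have hexp : ∑ i : ι, (c * a i - m - d * s i) ^ 2
      = c ^ 2 * (∑ i : ι, a i ^ 2) - c * m ^ 2 - c * d ^ 2 := by
    have hterm : ∀ i : ι, (c * a i - m - d * s i) ^ 2
        = c ^ 2 * a i ^ 2 - 2 * c * m * a i - 2 * c * d * (a i * s i)
          + m ^ 2 + 2 * m * d * s i + d ^ 2 := by
      intro i
      linear_combination (d ^ 2) * hs i
    rw [Finset.sum_congr rfl (fun i _ => hterm i)]
    have hconst1 : ∑ _i : ι, m ^ 2 = c * m ^ 2 := by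
      rw [Finset.sum_const, Finset.card_univ, nsmul_eq_mul]
    have hconst2 : ∑ _i : ι, d ^ 2 = c * d ^ 2 := by
      rw [Finset.sum_const, Finset.card_univ, nsmul_eq_mul]
    simp only [Finset.sum_add_distrib, Finset.sum_sub_distrib, ← Finset.mul_sum,
      hconst1, hconst2, hs0, ← hm, ← hd]
    ring
  rcases Nat.eq_zero_or_pos (Fintype.card ι) with hzero | hpos
  · have : IsEmpty ι := Fintype.card_eq_zero_iff.mp hzero
    simp [hm, hd, hc, hzero, Finset.univ_eq_empty]
  · have hcpos : (0:ℝ) < c := by rw [hc]; exact_mod_cast hpos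
    have h1 : c * (m ^ 2 + d ^ 2) ≤ c * (c * ∑ i : ι, a i ^ 2) := by nlinarith [hexp, h0]
    exact (mul_le_mul_iff_right₀ hcpos).mp h1

lemma key1 {H H' : AddSubgroup (Fin n → ZMod 2)} (hle : H' ≤ H) (A : Set (Fin n → ZMod 2))
    (g : Fin n → ZMod 2) :
    (Nat.card H : ℝ) * dns A H g ^ 2 ≤ ∑ x : H, dns A H' ((x : Fin n → ZMod 2) + g) ^ 2 := by
  have h := jensen_sq (fun x : H => dns A H' ((x : Fin n → ZMod 2) + g))
  rw [sum_dns_eq hle A g] at h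
  have hcast : (Fintype.card H : ℝ) = (Nat.card H : ℝ) := by rw [Nat.card_eq_fintype_card]
  rw [hcast] at h
  have hc := cardH_pos H
  nlinarith [h, hc]

lemma not_reg_iff (ε : ℝ) (A : Set (Fin n → ZMod 2)) (H : AddSubgroup (Fin n → ZMod 2))
    (g : Fin n → ZMod 2) :
    ¬ IsRegularValue ε A H g ↔
      ∃ η : H →+ ZMod 2, η ≠ 0 ∧ ε * Nat.card H < |fcoef A H g η| := by
  constructor
  · intro h
    by_contra hc
    push_neg at hc
    exact h (fun η hη => hc η hη)
  · rintro ⟨η, hη, hlt⟩ h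
    exact absurd (h η hη) (not_le.mpr hlt)

set_option maxHeartbeats 1600000 in
lemma step_lemma (ε : ℝ) (hε0 : 0 < ε) (A : Set (Fin n → ZMod 2))
    (H : AddSubgroup (Fin n → ZMod 2))
    (hbad : ε * (Fintype.card (Fin n → ZMod 2) : ℝ) <
      (Nat.card {g : Fin n → ZMod 2 // ¬ IsRegularValue ε A H g} : ℝ)) :
    ∃ H' : AddSubgroup (Fin n → ZMod 2),
      H'.index ≤ 2 ^ H.index * H.index ∧ energy A H + ε ^ 3 < energy A H' := by
  classical
  set B : Finset (Fin n → ZMod 2) :=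
    Finset.univ.filter (fun g => ¬ IsRegularValue ε A H g) with hB
  have hBcard : (Nat.card {g : Fin n → ZMod 2 // ¬ IsRegularValue ε A H g}) = B.card := by
    rw [Nat.card_eq_fintype_card, Fintype.card_subtype]
  -- choose a witness character for each g
  set pick : (Fin n → ZMod 2) → (H →+ ZMod 2) := fun g =>
    if h : ∃ η : H →+ ZMod 2, η ≠ 0 ∧ ε * Nat.card H < |fcoef A H g η| then h.choose else 0
    with hpick
  have pick_spec : ∀ g, ¬ IsRegularValue ε A H g →
      pick g ≠ 0 ∧ ε * Nat.card H < |fcoef A H g (pick g)| := by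
    intro g hg
    have h := (not_reg_iff ε A H g).mp hg
    simp only [hpick, dif_pos h]
    exact ⟨h.choose_spec.1, h.choose_spec.2⟩
  -- character chosen for each coset
  set ηg : (Fin n → ZMod 2) → (H →+ ZMod 2) := fun g =>
    pick (Quotient.out (QuotientAddGroup.mk (s := H) g)) with hηg
  have ηg_spec : ∀ g, ¬ IsRegularValue ε A H g →
      ηg g ≠ 0 ∧ ε * Nat.card H < |fcoef A H g (ηg g)| := by
    intro g hg
    set r : Fin n → ZMod 2 := Quotient.out (QuotientAddGroup.mk (s := H) g) with hr
    have hmk : (QuotientAddGroup.mk r : (Fin n → ZMod 2) ⧸ H) = QuotientAddGroup.mk g :=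
      QuotientAddGroup.out_eq' _
    have hmem : -r + g ∈ H := QuotientAddGroup.eq.mp hmk
    set c : H := ⟨-r + g, hmem⟩ with hc
    have hge : (c : Fin n → ZMod 2) + r = g := by
      show -r + g + r = g
      abel
    have habs : ∀ η : H →+ ZMod 2, |fcoef A H g η| = |fcoef A H r η| := by
      intro η
      rw [← hge, abs_fcoef_translate]
    have hrbad : ¬ IsRegularValue ε A H r := by
      rw [not_reg_iff] at hg ⊢
      obtain ⟨η, hη, hlt⟩ := hg
      exact ⟨η, hη, by rw [← habs η]; exact hlt⟩
    obtain ⟨h1, h2⟩ := pick_spec r hrbad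
    exact ⟨h1, by rw [habs]; exact h2⟩
  set S : Finset (H →+ ZMod 2) :=
    Finset.image (fun q : (Fin n → ZMod 2) ⧸ H => pick q.out) Finset.univ with hS
  have hηgS : ∀ g, ηg g ∈ S := fun g => Finset.mem_image_of_mem _ (Finset.mem_univ _)
  have hScard : S.card ≤ H.index := by
    calc S.card ≤ (Finset.univ : Finset ((Fin n → ZMod 2) ⧸ H)).card := Finset.card_image_le
      _ = Fintype.card ((Fin n → ZMod 2) ⧸ H) := Finset.card_univ
      _ = Nat.card ((Fin n → ZMod 2) ⧸ H) := (Nat.card_eq_fintype_card).symm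
      _ = H.index := (AddSubgroup.index_eq_card H).symm
  -- the refined subgroup
  set φ : H →+ (S → ZMod 2) :=
    AddMonoidHom.mk' (fun h => fun η => (η : H →+ ZMod 2) h)
      (by intro a b; funext η; exact map_add _ a b) with hφ
  set H' : AddSubgroup (Fin n → ZMod 2) := (φ.ker).map H.subtype with hH'
  have hle : H' ≤ H := AddSubgroup.map_subtype_le _
  have hker : ∀ η : H →+ ZMod 2, η ∈ S → ∀ y : H',
      η ⟨(y : Fin n → ZMod 2), hle y.2⟩ = 0 := by
    intro η hη y
    obtain ⟨z, hz, hzy⟩ := AddSubgroup.mem_map.mp y.2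
    have hzz : (⟨(y : Fin n → ZMod 2), hle y.2⟩ : H) = z := Subtype.ext (by rw [← hzy]; rfl)
    rw [hzz]
    have h0 : φ z = 0 := AddMonoidHom.mem_ker.mp hz
    exact congrFun h0 ⟨η, hη⟩
  have hidx : H'.index ≤ 2 ^ H.index * H.index := by
    have h1 : H'.index = (φ.ker).index * H.index := AddSubgroup.index_map_subtype _
    rw [h1]
    refine Nat.mul_le_mul_right _ ?_
    rw [AddSubgroup.index_ker]
    calc Nat.card φ.range ≤ Nat.card (S → ZMod 2) :=
          Nat.card_le_card_of_injective _ Subtype.val_injective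
      _ = Nat.card (ZMod 2) ^ Nat.card S := Nat.card_fun
      _ = 2 ^ S.card := by rw [Nat.card_zmod, Nat.card_eq_finsetCard]
      _ ≤ 2 ^ H.index := Nat.pow_le_pow_right (by norm_num) hScard
  refine ⟨H', hidx, ?_⟩
  -- energy increment
  have hc := cardH_pos H
  have key2 : ∀ g ∈ B, (Nat.card H : ℝ) * (dns A H g ^ 2 + ε ^ 2)
      ≤ ∑ x : H, dns A H' ((x : Fin n → ZMod 2) + g) ^ 2 := by
    intro g hgB
    have hg : ¬ IsRegularValue ε A H g := (Finset.mem_filter.mp hgB).2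
    obtain ⟨hη0, hηlt⟩ := ηg_spec g hg
    have hb := bessel_sq (fun x : H => dns A H' ((x : Fin n → ZMod 2) + g)) (sgn (ηg g))
      (sgn_mul_self (ηg g)) (sum_sgn_eq_zero hη0)
    rw [sum_dns_eq hle A g,
      sum_dns_sgn_eq hle A (ηg g) (fun y => hker (ηg g) (hηgS g) y) g] at hb
    have hcast : (Fintype.card H : ℝ) = (Nat.card H : ℝ) := by rw [Nat.card_eq_fintype_card]
    rw [hcast] at hb
    have hfc : (ε * (Nat.card H : ℝ)) ^ 2 ≤ (fcoef A H g (ηg g)) ^ 2 := by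
      have h1 : (0:ℝ) ≤ ε * (Nat.card H : ℝ) := by positivity
      nlinarith [abs_nonneg (fcoef A H g (ηg g)), sq_abs (fcoef A H g (ηg g)), hηlt]
    nlinarith [hb, hfc, hc]
  have hsum : ∀ g, (Nat.card H : ℝ) * (dns A H g ^ 2 + (if g ∈ B then ε ^ 2 else 0))
      ≤ ∑ x : H, dns A H' ((x : Fin n → ZMod 2) + g) ^ 2 := by
    intro g
    by_cases hgB : g ∈ B
    · simp only [if_pos hgB]
      exact key2 g hgB
    · simp only [if_neg hgB, add_zero]
      exact key1 hle A g
  have swap : ∑ g : Fin n → ZMod 2, ∑ x : H, dns A H' ((x : Fin n → ZMod 2) + g) ^ 2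
      = (Nat.card H : ℝ) * ∑ g : Fin n → ZMod 2, dns A H' g ^ 2 := by
    rw [Finset.sum_comm]
    have htr : ∀ x : H, ∑ g : Fin n → ZMod 2, dns A H' ((x : Fin n → ZMod 2) + g) ^ 2
        = ∑ g : Fin n → ZMod 2, dns A H' g ^ 2 :=
      fun x => sum_translate_V (fun v => dns A H' v ^ 2) _
    rw [Finset.sum_congr rfl (fun x _ => htr x), Finset.sum_const, Finset.card_univ,
      nsmul_eq_mul, Nat.card_eq_fintype_card]
  have hBsum : ∑ g : Fin n → ZMod 2, (if g ∈ B then (ε ^ 2 : ℝ) else 0) = ε ^ 2 * B.card := by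
    rw [Finset.sum_ite_mem, Finset.univ_inter, Finset.sum_const, nsmul_eq_mul]
    ring
  have main : (Nat.card H : ℝ) * ((∑ g : Fin n → ZMod 2, dns A H g ^ 2) + ε ^ 2 * B.card)
      ≤ (Nat.card H : ℝ) * ∑ g : Fin n → ZMod 2, dns A H' g ^ 2 := by
    rw [← swap, ← hBsum, ← Finset.sum_add_distrib, Finset.mul_sum]
    exact Finset.sum_le_sum (fun g _ => hsum g)
  have hfinal : (∑ g : Fin n → ZMod 2, dns A H g ^ 2) + ε ^ 2 * B.card
      ≤ ∑ g : Fin n → ZMod 2, dns A H' g ^ 2 := le_of_mul_le_mul_left main hc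
  have hbadR : ε * (Fintype.card (Fin n → ZMod 2) : ℝ) < (B.card : ℝ) := by
    rw [hBcard] at hbad
    exact hbad
  have hstrict : ε ^ 3 * (Fintype.card (Fin n → ZMod 2) : ℝ) < ε ^ 2 * B.card := by
    nlinarith [hbadR, pow_pos hε0 2]
  have hN := cardV_pos (n := n)
  have hlt : (∑ g : Fin n → ZMod 2, dns A H g ^ 2)
      + ε ^ 3 * (Fintype.card (Fin n → ZMod 2) : ℝ)
      < ∑ g : Fin n → ZMod 2, dns A H' g ^ 2 := by linarith
  unfold energy
  rw [div_add' _ _ _ (ne_of_gt hN), div_lt_div_iff_of_pos_right hN]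
  linarith [hlt]

/-- iterated index bound -/
def bfun : ℕ → ℕ
  | 0 => 1
  | k + 1 => 2 ^ bfun k * bfun k

lemma bfun_pos : ∀ k, 0 < bfun k
  | 0 => Nat.one_pos
  | k + 1 => Nat.mul_pos (Nat.pow_pos (by norm_num)) (bfun_pos k)

lemma two_mul_le_two_pow {x : ℕ} (hx : 1 ≤ x) : 2 * x ≤ 2 ^ x := by
  induction x with
  | zero => omega
  | succ k ih =>
    rcases Nat.eq_zero_or_pos k with hk | hk
    · subst hk; norm_num
    · have := ih hk
      have h2 : 2 ^ k < 2 ^ (k+1) := Nat.pow_lt_pow_right (by norm_num) (Nat.lt_succ_self k)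
      have h3 : 2 ^ (k+1) = 2 * 2 ^ k := by ring
      omega

lemma tower_pos : ∀ k, 0 < tower k
  | 0 => Nat.one_pos
  | k + 1 => Nat.pow_pos (by norm_num)

lemma tower_le_succ (k : ℕ) : tower k ≤ tower (k + 1) := by
  show tower k ≤ 2 ^ tower k
  exact le_of_lt (Nat.lt_two_pow_self)

lemma tower_mono : Monotone tower :=
  monotone_nat_of_le_succ tower_le_succ

lemma two_bfun_le_tower : ∀ k, 2 * bfun (k + 1) ≤ tower (k + 2) := by
  intro k
  induction k with
  | zero => norm_num [bfun, tower]
  | succ j ih =>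
    have hb1 : 1 ≤ bfun (j + 1) := bfun_pos (j + 1)
    have ht1 : 1 ≤ tower (j + 1) := tower_pos (j + 1)
    have h2t : 2 * tower (j + 1) ≤ 2 ^ tower (j + 1) := two_mul_le_two_pow ht1
    have hexp : tower (j + 1) + bfun (j + 1) ≤ tower (j + 2) := by
      have htt : tower (j + 2) = 2 ^ tower (j + 1) := rfl
      omega
    calc 2 * bfun (j + 2) = (2 * bfun (j + 1)) * 2 ^ bfun (j + 1) := by
          show 2 * (2 ^ bfun (j+1) * bfun (j+1)) = _
          ring
      _ ≤ tower (j + 2) * 2 ^ bfun (j + 1) := Nat.mul_le_mul_right _ ih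
      _ = 2 ^ tower (j + 1) * 2 ^ bfun (j + 1) := rfl
      _ = 2 ^ (tower (j + 1) + bfun (j + 1)) := (pow_add 2 _ _).symm
      _ ≤ 2 ^ tower (j + 2) := Nat.pow_le_pow_right (by norm_num) hexp
      _ = tower (j + 3) := rfl

lemma bfun_le_tower : ∀ k, bfun k ≤ tower (k + 1)
  | 0 => by norm_num [bfun, tower]
  | k + 1 => by
    show bfun (k+1) ≤ tower (k+2)
    have := two_bfun_le_tower k
    omega

lemma bfun_step {k a : ℕ} (h : a ≤ bfun k) : 2 ^ a * a ≤ bfun (k + 1) := by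
  show _ ≤ 2 ^ bfun k * bfun k
  exact Nat.mul_le_mul (Nat.pow_le_pow_right (by norm_num) h) h

lemma fcoef_empty (H : AddSubgroup (Fin n → ZMod 2)) (g : Fin n → ZMod 2)
    (η : H →+ ZMod 2) : fcoef (∅ : Set (Fin n → ZMod 2)) H g η = 0 := by
  rw [fcoef_eq]
  refine Finset.sum_eq_zero (fun x _ => ?_)
  unfold ind
  simp

lemma empty_regular (ε : ℝ) (hε0 : 0 < ε) (H : AddSubgroup (Fin n → ZMod 2))
    (g : Fin n → ZMod 2) : IsRegularValue ε (∅ : Set (Fin n → ZMod 2)) H g := by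
  intro η hη
  rw [fcoef_empty]
  simp only [abs_zero]
  positivity

set_option maxHeartbeats 800000 in
lemma energy_top_pos {A : Set (Fin n → ZMod 2)} (hA : A.Nonempty) :
    0 < energy A (⊤ : AddSubgroup (Fin n → ZMod 2)) := by
  obtain ⟨a, ha⟩ := hA
  have hdpos : 0 < dns A ⊤ a := by
    unfold dns
    refine div_pos ?_ (cardH_pos ⊤)
    have h1 : ind A (((0 : (⊤ : AddSubgroup (Fin n → ZMod 2))) : Fin n → ZMod 2) + a) = 1 := by
      unfold ind
      rw [show (((0 : (⊤ : AddSubgroup (Fin n → ZMod 2))) : Fin n → ZMod 2) + a) = a by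
        rw [ZeroMemClass.coe_zero, zero_add]]
      exact Set.indicator_of_mem ha _
    calc (0:ℝ) < 1 := one_pos
      _ = ind A (((0 : (⊤ : AddSubgroup (Fin n → ZMod 2))) : Fin n → ZMod 2) + a) := h1.symm
      _ ≤ ∑ x : (⊤ : AddSubgroup (Fin n → ZMod 2)), ind A ((x : Fin n → ZMod 2) + a) :=
          Finset.single_le_sum
            (f := fun x : (⊤ : AddSubgroup (Fin n → ZMod 2)) => ind A ((x : Fin n → ZMod 2) + a))
            (fun x _ => ind_nonneg A _) (Finset.mem_univ 0)
  unfold energy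
  refine div_pos ?_ cardV_pos
  calc (0:ℝ) < dns A ⊤ a ^ 2 := pow_pos hdpos 2
    _ ≤ ∑ g : Fin n → ZMod 2, dns A ⊤ g ^ 2 :=
        Finset.single_le_sum (f := fun g : Fin n → ZMod 2 => dns A ⊤ g ^ 2)
          (fun g _ => sq_nonneg _) (Finset.mem_univ a)

end Aux

/-- Theorem 2.1, regularity lemma in `(ℤ/2ℤ)ⁿ`. Let
`G = (ℤ/2ℤ)ⁿ` of size `N = 2ⁿ`, `ε ∈ (0,1/2)` and `A ⊆ G`. Then there is a subgroup
`H ≤ G` of index at most `W(ε⁻³)` (a tower of twos of height `⌈ε⁻³⌉`) which is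
`ε`-regular for `A`, i.e. the number of non-`ε`-regular values `g` is at most `εN`. -/
theorem regularity_lemma_Z2 {n : ℕ} (ε : ℝ) (hε0 : 0 < ε) (hε : ε < 1 / 2)
    (A : Set (Fin n → ZMod 2)) :
    ∃ H : AddSubgroup (Fin n → ZMod 2),
      H.index ≤ tower ⌈(ε ^ 3)⁻¹⌉₊ ∧
      (Nat.card {g : Fin n → ZMod 2 // ¬ IsRegularValue ε A H g} : ℝ) ≤
        ε * (Fintype.card (Fin n → ZMod 2) : ℝ) := by
  classical
  set m := ⌈(ε ^ 3)⁻¹⌉₊ with hm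
  have hε3 : (0:ℝ) < ε ^ 3 := by positivity
  have hmR : (ε ^ 3)⁻¹ ≤ (m : ℝ) := Nat.le_ceil _
  have hm_eps : (1:ℝ) ≤ (m : ℝ) * ε ^ 3 := by
    have h := mul_le_mul_of_nonneg_right hmR (le_of_lt hε3)
    rwa [inv_mul_cancel₀ (ne_of_gt hε3)] at h
  by_cases hA : A = ∅
  · refine ⟨⊤, ?_, ?_⟩
    · rw [AddSubgroup.index_top]
      exact tower_pos m
    · have hall : ∀ g, IsRegularValue ε A ⊤ g := by
        rw [hA]
        exact fun g => empty_regular ε hε0 ⊤ g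
      have hE : IsEmpty {g : Fin n → ZMod 2 // ¬ IsRegularValue ε A ⊤ g} :=
        ⟨fun gp => gp.2 (hall gp.1)⟩
      rw [Nat.card_of_isEmpty, Nat.cast_zero]
      positivity
  · have hAne : A.Nonempty := Set.nonempty_iff_ne_empty.mpr hA
    have main : ∀ k : ℕ, k ≤ m →
        (∃ H : AddSubgroup (Fin n → ZMod 2), H.index ≤ tower m ∧
          (Nat.card {g : Fin n → ZMod 2 // ¬ IsRegularValue ε A H g} : ℝ) ≤
            ε * (Fintype.card (Fin n → ZMod 2) : ℝ)) ∨
        (∃ H : AddSubgroup (Fin n → ZMod 2), H.index ≤ bfun k ∧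
          (k : ℝ) * ε ^ 3 < energy A H) := by
      intro k
      induction k with
      | zero =>
        intro _
        by_cases hreg : (Nat.card {g : Fin n → ZMod 2 // ¬ IsRegularValue ε A ⊤ g} : ℝ) ≤
            ε * (Fintype.card (Fin n → ZMod 2) : ℝ)
        · left
          exact ⟨⊤, by rw [AddSubgroup.index_top]; exact tower_pos m, hreg⟩
        · right
          refine ⟨⊤, le_of_eq (AddSubgroup.index_top), ?_⟩
          rw [Nat.cast_zero, zero_mul]
          exact energy_top_pos hAne
      | succ k ih =>
        intro hk1
        rcases ih (by omega) with hL | ⟨H, hidx, hE⟩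
        · left; exact hL
        · by_cases hreg : (Nat.card {g : Fin n → ZMod 2 // ¬ IsRegularValue ε A H g} : ℝ) ≤
              ε * (Fintype.card (Fin n → ZMod 2) : ℝ)
          · left
            exact ⟨H, le_trans hidx (le_trans (bfun_le_tower k) (tower_mono (by omega))), hreg⟩
          · obtain ⟨H', hidx', hE'⟩ := step_lemma ε hε0 A H (not_le.mp hreg)
            right
            refine ⟨H', le_trans hidx' (bfun_step hidx), ?_⟩
            have hcast : ((k + 1 : ℕ) : ℝ) * ε ^ 3 = (k : ℝ) * ε ^ 3 + ε ^ 3 := by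
              push_cast; ring
            rw [hcast]
            linarith
    rcases main m (le_refl m) with hL | ⟨H, _, hE⟩
    · exact hL
    · exfalso
      have h1 : energy A H ≤ 1 := energy_le_one A H
      linarith
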